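/- Let γ > e and set α := 1/ln γ. Let (v_i) and (a_i), indexed by a finite set I, be real numbers with 0 ≤ a_i ≤ v_i for each i, let A := ∑_{i∈I} a_i, and let m > 0 satisfy A ≥ m. Assume γ·v_i ≤ A for every i with a_i > 0. Then A^α + ∑_{i∈I} (v_i − a_i)^α − ∑_{i∈I} v_i^α ≤ −(γ/(e·ln γ) − 1) · m^α. -/

import Mathlib

open Finset

/-- Bernoulli-based per-term bound: for `0 ≤ a ≤ v`, `0 < v`, `0 < α < 1`,
`(v - a)^α ≤ v^α - α * a * v^(α-1)`. -/
lemma aux_concave_step {v a α : ℝ} (ha0 : 0 ≤ a) (hav : a ≤ v) (hv : 0 < v)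
    (hα0 : 0 ≤ α) (hα1 : α ≤ 1) :
    (v - a) ^ α ≤ v ^ α - α * a * v ^ (α - 1) := by
  have hs : (-1 : ℝ) ≤ -(a / v) := by
    rw [neg_le_neg_iff]
    exact div_le_one_of_le₀ hav hv.le
  have hb := rpow_one_add_le_one_add_mul_self hs hα0 hα1
  have hvne : v ≠ 0 := hv.ne'
  have h1 : v - a = v * (1 + -(a / v)) := by field_simp; ring
  have h2 : (v - a) ^ α = v ^ α * (1 + -(a / v)) ^ α := by
    rw [h1, Real.mul_rpow hv.le (by linarith [div_le_one_of_le₀ hav hv.le])]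
  rw [h2]
  have h3 : v ^ α * (1 + α * -(a / v)) = v ^ α - α * a * v ^ (α - 1) := by
    rw [Real.rpow_sub_one hvne]
    field_simp
    ring
  calc v ^ α * (1 + -(a / v)) ^ α ≤ v ^ α * (1 + α * -(a / v)) := by
        exact mul_le_mul_of_nonneg_left hb (Real.rpow_nonneg hv.le α)
    _ = v ^ α - α * a * v ^ (α - 1) := h3

theorem tsallis_gamma_move_decrease (γ m : ℝ) (hγ : Real.exp 1 < γ) (hm : 0 < m)
    {ι : Type*} (I : Finset ι) (v a : ι → ℝ)
    (ha : ∀ i ∈ I, 0 ≤ a i ∧ a i ≤ v i)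
    (hA : m ≤ ∑ i ∈ I, a i)
    (hmove : ∀ i ∈ I, 0 < a i → γ * v i ≤ ∑ i' ∈ I, a i') :
    (∑ i ∈ I, a i) ^ (1 / Real.log γ)
        + ∑ i ∈ I, (v i - a i) ^ (1 / Real.log γ)
        - ∑ i ∈ I, v i ^ (1 / Real.log γ)
      ≤ -(γ / (Real.exp 1 * Real.log γ) - 1) * m ^ (1 / Real.log γ) := by
  set α := 1 / Real.log γ with hαdef
  set A := ∑ i ∈ I, a i with hAdef
  have hγ0 : (0 : ℝ) < γ := (Real.exp_pos 1).trans hγ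
  have hlog : 1 < Real.log γ := by
    rwa [Real.lt_log_iff_exp_lt hγ0]
  have hlog0 : 0 < Real.log γ := by linarith
  have hα0 : 0 < α := by positivity
  have hα1 : α < 1 := by
    rw [hαdef, div_lt_one hlog0]; exact hlog
  have hApos : 0 < A := lt_of_lt_of_le hm hA
  -- γ^α = e
  have hγα : γ ^ α = Real.exp 1 := by
    rw [Real.rpow_def_of_pos hγ0, hαdef, mul_one_div, div_self hlog0.ne']
  -- per-term bound
  have key : ∀ i ∈ I, α * a i * (A / γ) ^ (α - 1) ≤ v i ^ α - (v i - a i) ^ α := by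
    intro i hi
    rcases (ha i hi).1.eq_or_lt with h0 | hpos
    · simp [← h0]
    · have hvi : 0 < v i := lt_of_lt_of_le hpos (ha i hi).2
      have hle : v i ≤ A / γ := by
        rw [le_div_iff₀ hγ0, mul_comm]
        exact hmove i hi hpos
      have h1 := aux_concave_step (ha i hi).1 (ha i hi).2 hvi hα0.le hα1.le
      have h2 : (A / γ) ^ (α - 1) ≤ v i ^ (α - 1) :=
        Real.rpow_le_rpow_of_nonpos hvi hle (by linarith)
      have h3 : α * a i * (A / γ) ^ (α - 1) ≤ α * a i * v i ^ (α - 1) := by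
        apply mul_le_mul_of_nonneg_left h2
        positivity
      linarith
  have hsum : α * A * (A / γ) ^ (α - 1) ≤ ∑ i ∈ I, v i ^ α - ∑ i ∈ I, (v i - a i) ^ α := by
    rw [← Finset.sum_sub_distrib]
    calc α * A * (A / γ) ^ (α - 1) = ∑ i ∈ I, α * a i * (A / γ) ^ (α - 1) := by
          rw [← Finset.sum_mul, ← Finset.mul_sum]
      _ ≤ _ := Finset.sum_le_sum key
  -- evaluate the sum's lower bound
  have hcalc : α * A * (A / γ) ^ (α - 1) = γ / (Real.exp 1 * Real.log γ) * A ^ α := by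
    rw [Real.div_rpow hApos.le hγ0.le, Real.rpow_sub_one hApos.ne',
        Real.rpow_sub_one hγ0.ne', hγα, hαdef]
    field_simp
  -- coefficient nonneg : e * log γ ≤ γ
  have hcoeff : 1 ≤ γ / (Real.exp 1 * Real.log γ) := by
    rw [le_div_iff₀ (by positivity)]
    have h := Real.log_le_sub_one_of_pos (x := γ / Real.exp 1) (by positivity)
    rw [Real.log_div hγ0.ne' (Real.exp_pos 1).ne', Real.log_exp] at h
    have : Real.log γ ≤ γ / Real.exp 1 := by linarith
    have h2 : Real.exp 1 * Real.log γ ≤ γ := by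
      calc Real.exp 1 * Real.log γ ≤ Real.exp 1 * (γ / Real.exp 1) :=
            mul_le_mul_of_nonneg_left this (Real.exp_pos 1).le
        _ = γ := by field_simp
    linarith
  have hmA : m ^ α ≤ A ^ α := Real.rpow_le_rpow hm.le hA hα0.le
  have hfinal : A ^ α + ∑ i ∈ I, (v i - a i) ^ α - ∑ i ∈ I, v i ^ α
      ≤ -(γ / (Real.exp 1 * Real.log γ) - 1) * A ^ α := by
    have := hsum
    rw [hcalc] at this
    nlinarith [Real.rpow_nonneg hApos.le α]
  calc A ^ α + ∑ i ∈ I, (v i - a i) ^ α - ∑ i ∈ I, v i ^ α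
      ≤ -(γ / (Real.exp 1 * Real.log γ) - 1) * A ^ α := hfinal
    _ ≤ -(γ / (Real.exp 1 * Real.log γ) - 1) * m ^ α := by
        apply mul_le_mul_of_nonpos_left hmA
        linarith
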